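/- Pairwise position probabilities of the CorgiPile shuffle. Let N ≥ 2 and nb ≥ 2. For any two distinct positions k ≠ k' in {1,…,nb} and any two distinct indices i ≠ j in {1,…,m}: (1) if i and j lie in the same block B_l, then P(ψ(k) = i and ψ(k') = j) = 1/(N·b·(nb−1)); (2) if i ∈ B_l and j ∈ B_{l'} with l ≠ l', then P(ψ(k) = i and ψ(k') = j) = (n−1)/(N·b·(N−1)·(nb−1)). Moreover, P(ψ(k) = i and ψ(k') = i) = 0. -/

import Mathlib

open Finset

noncomputable section

/-- A CorgiPile shuffle: a set of `n` blocks (out of `N`) together with an injection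
from the `n*b` positions onto the set of indices belonging to the chosen blocks. -/
def CorgiShuffle (N n b : ℕ) (blk : Fin (N * b) → Fin N) : Type :=
  { p : Finset (Fin N) × (Fin (n * b) → Fin (N * b)) //
      p.1.card = n ∧ Function.Injective p.2 ∧
      (∀ k, blk (p.2 k) ∈ p.1) ∧
      (∀ i, blk i ∈ p.1 → ∃ k, p.2 k = i) }

noncomputable instance (N n b : ℕ) (blk : Fin (N * b) → Fin N) :
    Fintype (CorgiShuffle N n b blk) := by
  unfold CorgiShuffle; exact Fintype.ofFinite _

/-- The `l`-th block, as a finset of indices. -/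
def blockSet {N b : ℕ} (blk : Fin (N * b) → Fin N) (l : Fin N) : Finset (Fin (N * b)) :=
  Finset.univ.filter (fun i => blk i = l)

/- ---------------- Auxiliary lemmas ---------------- -/

lemma card_equiv_fix_two {α β : Type*} [DecidableEq α] [DecidableEq β] [Fintype α] [Fintype β]
    (h : Fintype.card α = Fintype.card β)
    {a a' : α} {x y : β} (ha : a ≠ a') (hx : x ≠ y) :
    Fintype.card {e : α ≃ β // e a = x ∧ e a' = y} = (Fintype.card α - 2).factorial := by
  classical
  let e₀ : ({a, a'} : Set α) ≃ ({x, y} : Set β) :=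
  { toFun := fun z => if z.1 = a then ⟨x, by simp⟩ else ⟨y, by simp⟩
    invFun := fun w => if w.1 = x then ⟨a, by simp⟩ else ⟨a', by simp⟩
    left_inv := by
      rintro ⟨z, hz⟩
      rcases hz with h1 | h1
      · simp [h1]
      · simp only [Set.mem_singleton_iff] at h1
        subst h1
        simp [ha.symm, hx.symm]
    right_inv := by
      rintro ⟨w, hw⟩
      rcases hw with h1 | h1
      · simp [h1]
      · simp only [Set.mem_singleton_iff] at h1
        subst h1
        simp [ha.symm, hx.symm] }
  have he₀a : (e₀ ⟨a, by simp⟩ : β) = x := by simp [e₀]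
  have he₀a' : (e₀ ⟨a', by simp⟩ : β) = y := by simp [e₀, ha.symm]
  have key : {e : α ≃ β // e a = x ∧ e a' = y} ≃
      {e : α ≃ β // ∀ z : ({a, a'} : Set α), e z = (e₀ z : β)} := by
    refine Equiv.subtypeEquivRight fun e => ⟨?_, ?_⟩
    · rintro ⟨h1, h2⟩ ⟨z, hz⟩
      rcases hz with h3 | h3
      · subst h3; exact h1.trans he₀a.symm
      · simp only [Set.mem_singleton_iff] at h3
        subst h3; exact h2.trans he₀a'.symm
    · intro hcond
      exact ⟨by rw [hcond ⟨a, by simp⟩, he₀a], by rw [hcond ⟨a', by simp⟩, he₀a']⟩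
  rw [Fintype.card_congr key, Fintype.card_congr (Equiv.Set.compl e₀)]
  have hcs : Fintype.card (({a, a'} : Set α)ᶜ : Set α) = Fintype.card α - 2 := by
    rw [Fintype.card_compl_set]
    congr 1
    rw [← Set.toFinset_card, Set.toFinset_insert, Set.toFinset_singleton,
      card_insert_of_notMem (by simp [ha]), card_singleton]
  have hct : Fintype.card (({x, y} : Set β)ᶜ : Set β) = Fintype.card α - 2 := by
    rw [Fintype.card_compl_set, h]
    congr 1
    rw [← Set.toFinset_card, Set.toFinset_insert, Set.toFinset_singleton,
      card_insert_of_notMem (by simp [hx]), card_singleton]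
  rw [Fintype.card_equiv (Fintype.equivOfCardEq (hcs.trans hct.symm)), hcs]

lemma card_filter_subset {N n : ℕ} (R : Finset (Fin N)) (hR : R.card ≤ n) :
    (univ.filter fun S : Finset (Fin N) => S.card = n ∧ R ⊆ S).card
      = (N - R.card).choose (n - R.card) := by
  have hcard : (univ \ R).card = N - R.card := by
    rw [card_sdiff_of_subset (subset_univ R)]; simp
  rw [← hcard, ← Finset.card_powersetCard (n - R.card) (univ \ R)]
  apply Finset.card_bij' (fun S _ => S \ R) (fun T _ => T ∪ R)
  · intro S hS
    simp only [mem_filter, mem_univ, true_and] at hS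
    rw [mem_powersetCard]
    exact ⟨sdiff_subset_sdiff (subset_univ S) le_rfl,
      by rw [card_sdiff_of_subset hS.2, hS.1]⟩
  · intro T hT
    rw [mem_powersetCard] at hT
    have hdisj : Disjoint T R := disjoint_right.2 fun x hxR hxT =>
      (mem_sdiff.1 (hT.1 hxT)).2 hxR
    simp only [mem_filter, mem_univ, true_and]
    constructor
    · rw [card_union_of_disjoint hdisj, hT.2]
      omega
    · exact subset_union_right
  · intro S hS
    simp only [mem_filter, mem_univ, true_and] at hS
    exact sdiff_union_of_subset hS.2
  · intro T hT
    rw [mem_powersetCard] at hT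
    have hdisj : Disjoint T R := disjoint_right.2 fun x hxR hxT =>
      (mem_sdiff.1 (hT.1 hxT)).2 hxR
    simp [union_sdiff_distrib, sdiff_eq_self_of_disjoint hdisj]

lemma card_filter_subset_zero {N n : ℕ} (R : Finset (Fin N)) (hR : n < R.card) :
    (univ.filter fun S : Finset (Fin N) => S.card = n ∧ R ⊆ S).card = 0 := by
  rw [Finset.card_eq_zero, filter_eq_empty_iff]
  rintro S _ ⟨h1, h2⟩
  have := card_le_card h2
  omega

lemma card_filter_card_eq {N n : ℕ} :
    (univ.filter fun S : Finset (Fin N) => S.card = n).card = N.choose n := by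
  have h : (univ.filter fun S : Finset (Fin N) => S.card = n) = powersetCard n univ := by
    ext S; simp [mem_powersetCard]
  rw [congrArg Finset.card h, Finset.card_powersetCard]
  simp

lemma card_TS {N n b : ℕ} (blk : Fin (N * b) → Fin N)
    (hblk : ∀ l, (blockSet blk l).card = b) (S : Finset (Fin N)) (hS : S.card = n) :
    Fintype.card {x : Fin (N * b) // blk x ∈ S} = n * b := by
  rw [Fintype.card_subtype]
  have heq : univ.filter (fun x => blk x ∈ S) = S.biUnion (blockSet blk) := by
    ext x
    simp only [blockSet, mem_filter, mem_univ, true_and, mem_biUnion]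
    exact ⟨fun hx => ⟨blk x, hx, rfl⟩, by rintro ⟨l, hl, rfl⟩; exact hl⟩
  rw [heq, card_biUnion, ← hS]
  · simp [hblk, mul_comm]
  · intro l _ l' _ hll'
    simp only [disjoint_left, blockSet, mem_filter]
    rintro x ⟨_, h1⟩ ⟨_, h2⟩
    exact hll' (h1 ▸ h2 ▸ rfl)

def corgiToFun {N n b : ℕ} (blk : Fin (N * b) → Fin N) (ω : CorgiShuffle N n b blk) :
    Σ S : {S : Finset (Fin N) // S.card = n}, (Fin (n * b) ≃ {x : Fin (N * b) // blk x ∈ S.1}) :=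
  ⟨⟨ω.1.1, ω.2.1⟩,
    Equiv.ofBijective (fun k => ⟨ω.1.2 k, ω.2.2.2.1 k⟩)
      ⟨fun k k' h => ω.2.2.1 (congrArg Subtype.val h),
       fun x => by obtain ⟨k, hk⟩ := ω.2.2.2.2 x.1 x.2; exact ⟨k, Subtype.ext hk⟩⟩⟩

lemma corgiToFun_bijective {N n b : ℕ} (blk : Fin (N * b) → Fin N) :
    Function.Bijective (corgiToFun (n := n) blk) := by
  constructor
  · rintro ⟨⟨S, f⟩, hω⟩ ⟨⟨S', f'⟩, hω'⟩ h
    obtain ⟨h1, h2⟩ := Sigma.mk.inj_iff.1 h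
    have hS : S = S' := congrArg Subtype.val h1
    subst hS
    have h2' := eq_of_heq h2
    have hf : f = f' := by
      funext q
      exact congrArg (fun (e : Fin (n*b) ≃ {x : Fin (N*b) // blk x ∈ S}) => (e q).1) h2'
    subst hf
    rfl
  · rintro ⟨S, e⟩
    refine ⟨⟨(S.1, fun k => (e k).1), S.2, fun k k' h => e.injective (Subtype.ext h),
      fun k => (e k).2,
      fun x hx => ⟨e.symm ⟨x, hx⟩, congrArg Subtype.val (e.apply_symm_apply ⟨x, hx⟩)⟩⟩, ?_⟩
    apply Sigma.ext
    · rfl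
    · apply heq_of_eq
      apply Equiv.ext
      intro k
      apply Subtype.ext
      rfl

def corgiEquiv {N n b : ℕ} (blk : Fin (N * b) → Fin N) :
    CorgiShuffle N n b blk ≃
      Σ S : {S : Finset (Fin N) // S.card = n}, (Fin (n * b) ≃ {x : Fin (N * b) // blk x ∈ S.1}) :=
  Equiv.ofBijective (corgiToFun blk) (corgiToFun_bijective blk)

def sigmaSubtypeEquiv {α : Type*} {β : α → Type*} (P : ∀ a, β a → Prop) :
    {σ : Σ a, β a // P σ.1 σ.2} ≃ Σ a, {b : β a // P a b} where
  toFun x := ⟨x.1.1, x.1.2, x.2⟩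
  invFun x := ⟨⟨x.1, x.2.1⟩, x.2.2⟩
  left_inv x := rfl
  right_inv x := rfl

lemma corgi_total_card {N n b : ℕ} (blk : Fin (N * b) → Fin N)
    (hblk : ∀ l, (blockSet blk l).card = b) :
    Fintype.card (CorgiShuffle N n b blk) = N.choose n * (n * b).factorial := by
  classical
  rw [Fintype.card_congr (corgiEquiv blk), Fintype.card_sigma]
  have h : ∀ S : {S : Finset (Fin N) // S.card = n},
      Fintype.card (Fin (n * b) ≃ {x : Fin (N * b) // blk x ∈ S.1}) = (n * b).factorial := by
    intro S
    have e : Fin (n * b) ≃ {x : Fin (N * b) // blk x ∈ S.1} :=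
      Fintype.equivOfCardEq (by rw [Fintype.card_fin, card_TS blk hblk S.1 S.2])
    rw [Fintype.card_equiv e, Fintype.card_fin]
  simp only [h, Finset.sum_const, card_univ, smul_eq_mul]
  rw [Fintype.card_subtype, card_filter_card_eq]

lemma corgi_event_card {N n b : ℕ} (blk : Fin (N * b) → Fin N)
    (hblk : ∀ l, (blockSet blk l).card = b)
    (k k' : Fin (n * b)) (hkk' : k ≠ k') (i j : Fin (N * b)) (hij : i ≠ j) :
    (Finset.univ.filter
        (fun ω : CorgiShuffle N n b blk => ω.val.2 k = i ∧ ω.val.2 k' = j)).card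
      = (univ.filter fun S : Finset (Fin N) => S.card = n ∧ blk i ∈ S ∧ blk j ∈ S).card
          * (n * b - 2).factorial := by
  classical
  rw [← Fintype.card_subtype]
  rw [Fintype.card_congr (Equiv.subtypeEquiv (corgiEquiv blk)
    (p := fun ω : CorgiShuffle N n b blk => ω.val.2 k = i ∧ ω.val.2 k' = j)
    (q := fun σ : Σ S : {S : Finset (Fin N) // S.card = n},
        (Fin (n * b) ≃ {x : Fin (N * b) // blk x ∈ S.1}) =>
      ((σ.2 k : Fin (N * b)) = i ∧ (σ.2 k' : Fin (N * b)) = j))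
    (fun ω => Iff.rfl))]
  rw [Fintype.card_congr (sigmaSubtypeEquiv
    (fun (S : {S : Finset (Fin N) // S.card = n})
         (e : Fin (n * b) ≃ {x : Fin (N * b) // blk x ∈ S.1}) =>
      ((e k : Fin (N * b)) = i ∧ (e k' : Fin (N * b)) = j)))]
  rw [Fintype.card_sigma]
  have hinner : ∀ S : {S : Finset (Fin N) // S.card = n},
      Fintype.card {e : Fin (n * b) ≃ {x : Fin (N * b) // blk x ∈ S.1} //
          (e k : Fin (N * b)) = i ∧ (e k' : Fin (N * b)) = j}
        = if blk i ∈ S.1 ∧ blk j ∈ S.1 then (n * b - 2).factorial else 0 := by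
    intro S
    split_ifs with hmem
    · obtain ⟨hi, hj⟩ := hmem
      have hcond : ∀ e : Fin (n * b) ≃ {x : Fin (N * b) // blk x ∈ S.1},
          ((e k : Fin (N * b)) = i ∧ (e k' : Fin (N * b)) = j) ↔
            (e k = ⟨i, hi⟩ ∧ e k' = ⟨j, hj⟩) := by
        intro e
        rw [Subtype.ext_iff, Subtype.ext_iff]
      rw [Fintype.card_congr (Equiv.subtypeEquivRight hcond)]
      have := card_equiv_fix_two (α := Fin (n * b)) (β := {x : Fin (N * b) // blk x ∈ S.1})
        (by rw [Fintype.card_fin, card_TS blk hblk S.1 S.2]) hkk'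
        (x := ⟨i, hi⟩) (y := ⟨j, hj⟩) (by simp [Subtype.ext_iff, hij])
      rw [this, Fintype.card_fin]
    · rw [Fintype.card_eq_zero_iff]
      constructor
      rintro ⟨e, h1, h2⟩
      exact hmem ⟨h1 ▸ (e k).2, h2 ▸ (e k').2⟩
  simp only [hinner]
  rw [← Finset.sum_subtype (univ.filter fun S : Finset (Fin N) => S.card = n)
    (by intro S; simp) (fun S => if blk i ∈ S ∧ blk j ∈ S then (n * b - 2).factorial else 0)]
  rw [← Finset.sum_filter, Finset.filter_filter, Finset.sum_const, smul_eq_mul]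

theorem corgi_shuffle_pairwise_probabilities {N n b : ℕ}
    (hN : 2 ≤ N) (hn1 : 1 ≤ n) (hnN : n ≤ N) (hnb : 2 ≤ n * b)
    (blk : Fin (N * b) → Fin N)
    (hblk : ∀ l, (blockSet blk l).card = b)
    (k k' : Fin (n * b)) (hkk' : k ≠ k')
    (i j : Fin (N * b)) (hij : i ≠ j) :
    (blk i = blk j →
      ((Finset.univ.filter
          (fun ω : CorgiShuffle N n b blk => ω.val.2 k = i ∧ ω.val.2 k' = j)).card : ℝ) /
          (Fintype.card (CorgiShuffle N n b blk) : ℝ)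
        = 1 / ((N : ℝ) * (b : ℝ) * ((n : ℝ) * (b : ℝ) - 1)))
    ∧ (blk i ≠ blk j →
      ((Finset.univ.filter
          (fun ω : CorgiShuffle N n b blk => ω.val.2 k = i ∧ ω.val.2 k' = j)).card : ℝ) /
          (Fintype.card (CorgiShuffle N n b blk) : ℝ)
        = ((n : ℝ) - 1) / ((N : ℝ) * (b : ℝ) * ((N : ℝ) - 1) * ((n : ℝ) * (b : ℝ) - 1)))
    ∧ ((Finset.univ.filter
          (fun ω : CorgiShuffle N n b blk => ω.val.2 k = i ∧ ω.val.2 k' = i)).card : ℝ) /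
          (Fintype.card (CorgiShuffle N n b blk) : ℝ) = 0 := by
  classical
  have hb1 : 1 ≤ b := by
    rcases Nat.eq_zero_or_pos b with h | h
    · rw [h, Nat.mul_zero] at hnb; omega
    · exact h
  have hT := corgi_total_card (n := n) blk hblk
  have hE := corgi_event_card blk hblk k k' hkk' i j hij
  have hTpos : 0 < N.choose n * (n * b).factorial :=
    Nat.mul_pos (Nat.choose_pos hnN) (Nat.factorial_pos _)
  have hTne : ((N.choose n * (n * b).factorial : ℕ) : ℝ) ≠ 0 := by
    exact_mod_cast hTpos.ne'
  -- factorial decomposition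
  obtain ⟨m, hm⟩ : ∃ m, n * b = m + 2 := ⟨n * b - 2, by omega⟩
  have hfact : (n * b).factorial = (m + 2) * ((m + 1) * m.factorial) := by
    rw [hm, Nat.factorial_succ, Nat.factorial_succ]
  have hchoose1 : N * (N - 1).choose (n - 1) = N.choose n * n := by
    have h := Nat.add_one_mul_choose_eq (N - 1) (n - 1)
    have e1 : N - 1 + 1 = N := by omega
    have e2 : n - 1 + 1 = n := by omega
    rwa [e1, e2] at h
  refine ⟨?_, ?_, ?_⟩
  · -- same block
    intro hbb
    have hfilt : (univ.filter fun S : Finset (Fin N) => S.card = n ∧ blk i ∈ S ∧ blk j ∈ S)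
        = (univ.filter fun S : Finset (Fin N) => S.card = n ∧ ({blk i} : Finset (Fin N)) ⊆ S) := by
      ext S
      simp [hbb, singleton_subset_iff, and_self]
    have hcnt : (univ.filter fun S : Finset (Fin N) =>
        S.card = n ∧ blk i ∈ S ∧ blk j ∈ S).card = (N - 1).choose (n - 1) := by
      rw [hfilt, card_filter_subset _ (by simp [hn1]), card_singleton]
    rw [hE, hcnt, hT]
    have hnatid : (N - 1).choose (n - 1) * (n * b - 2).factorial * (N * b * (n * b - 1))
        = N.choose n * (n * b).factorial := by
      have h1 : n * b - 2 = m := by omega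
      have h2 : n * b - 1 = m + 1 := by omega
      rw [h1, h2, hfact]
      calc (N - 1).choose (n - 1) * m.factorial * (N * b * (m + 1))
          = (N * (N - 1).choose (n - 1)) * b * ((m + 1) * m.factorial) := by ring
        _ = (N.choose n * n) * b * ((m + 1) * m.factorial) := by rw [hchoose1]
        _ = N.choose n * ((n * b) * ((m + 1) * m.factorial)) := by ring
        _ = N.choose n * ((m + 2) * ((m + 1) * m.factorial)) := by rw [hm]
    have hDne : (N : ℝ) * (b : ℝ) * ((n : ℝ) * (b : ℝ) - 1) ≠ 0 := by
      have : ((N * b * (n * b - 1) : ℕ) : ℝ) = (N : ℝ) * (b : ℝ) * ((n : ℝ) * (b : ℝ) - 1) := by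
        push_cast [Nat.cast_sub (show 1 ≤ n * b by omega)]
        ring
      rw [← this]
      have : 0 < N * b * (n * b - 1) :=
        Nat.mul_pos (Nat.mul_pos (by omega) hb1) (by omega)
      exact_mod_cast this.ne'
    rw [div_eq_div_iff hTne hDne, one_mul]
    have hcast : ((N * b * (n * b - 1) : ℕ) : ℝ) = (N : ℝ) * (b : ℝ) * ((n : ℝ) * (b : ℝ) - 1) := by
      push_cast [Nat.cast_sub (show 1 ≤ n * b by omega)]
      ring
    rw [← hcast]
    exact_mod_cast hnatid
  · -- different blocks
    intro hbb
    have hfilt : (univ.filter fun S : Finset (Fin N) => S.card = n ∧ blk i ∈ S ∧ blk j ∈ S)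
        = (univ.filter fun S : Finset (Fin N) =>
            S.card = n ∧ ({blk i, blk j} : Finset (Fin N)) ⊆ S) := by
      ext S
      simp [insert_subset_iff, singleton_subset_iff]
    have hRcard : ({blk i, blk j} : Finset (Fin N)).card = 2 := by
      rw [card_insert_of_notMem (by simpa using hbb), card_singleton]
    rcases Nat.lt_or_ge n 2 with hn2 | hn2
    · -- n = 1 : event impossible
      have hn1' : n = 1 := by omega
      have hcnt : (univ.filter fun S : Finset (Fin N) =>
          S.card = n ∧ blk i ∈ S ∧ blk j ∈ S).card = 0 := by
        rw [hfilt, card_filter_subset_zero _ (by rw [hRcard]; omega)]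
      rw [hE, hcnt, Nat.zero_mul, Nat.cast_zero, zero_div, hn1']
      norm_num
    · have hcnt : (univ.filter fun S : Finset (Fin N) =>
          S.card = n ∧ blk i ∈ S ∧ blk j ∈ S).card = (N - 2).choose (n - 2) := by
        rw [hfilt, card_filter_subset _ (by rw [hRcard]; omega), hRcard]
      rw [hE, hcnt, hT]
      have hchoose2 : (N - 1) * (N - 2).choose (n - 2) = (N - 1).choose (n - 1) * (n - 1) := by
        have h := Nat.add_one_mul_choose_eq (N - 2) (n - 2)
        have e1 : N - 2 + 1 = N - 1 := by omega
        have e2 : n - 2 + 1 = n - 1 := by omega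
        rwa [e1, e2] at h
      have hnatid : (N - 2).choose (n - 2) * (n * b - 2).factorial
            * (N * b * (N - 1) * (n * b - 1))
          = (n - 1) * (N.choose n * (n * b).factorial) := by
        have h1 : n * b - 2 = m := by omega
        have h2 : n * b - 1 = m + 1 := by omega
        rw [h1, h2, hfact]
        calc (N - 2).choose (n - 2) * m.factorial * (N * b * (N - 1) * (m + 1))
            = N * ((N - 1) * (N - 2).choose (n - 2)) * b * ((m + 1) * m.factorial) := by ring
          _ = N * ((N - 1).choose (n - 1) * (n - 1)) * b * ((m + 1) * m.factorial) := by
              rw [hchoose2]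
          _ = (N * (N - 1).choose (n - 1)) * (n - 1) * b * ((m + 1) * m.factorial) := by ring
          _ = (N.choose n * n) * (n - 1) * b * ((m + 1) * m.factorial) := by rw [hchoose1]
          _ = (n - 1) * (N.choose n * ((n * b) * ((m + 1) * m.factorial))) := by ring
          _ = (n - 1) * (N.choose n * ((m + 2) * ((m + 1) * m.factorial))) := by rw [hm]
      have hcastD : ((N * b * (N - 1) * (n * b - 1) : ℕ) : ℝ)
          = (N : ℝ) * (b : ℝ) * ((N : ℝ) - 1) * ((n : ℝ) * (b : ℝ) - 1) := by
        push_cast [Nat.cast_sub (show 1 ≤ n * b by omega), Nat.cast_sub (show 1 ≤ N by omega)]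
        ring
      have hDne : (N : ℝ) * (b : ℝ) * ((N : ℝ) - 1) * ((n : ℝ) * (b : ℝ) - 1) ≠ 0 := by
        rw [← hcastD]
        have : 0 < N * b * (N - 1) * (n * b - 1) :=
          Nat.mul_pos (Nat.mul_pos (Nat.mul_pos (by omega) hb1) (by omega)) (by omega)
        exact_mod_cast this.ne'
      have hcastn : (n : ℝ) - 1 = ((n - 1 : ℕ) : ℝ) := by
        push_cast [Nat.cast_sub (show 1 ≤ n by omega)]
        ring
      rw [div_eq_div_iff hTne hDne, ← hcastD, hcastn]
      exact_mod_cast hnatid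
  · -- i = j case is impossible
    have hzero : (univ.filter
        (fun ω : CorgiShuffle N n b blk => ω.val.2 k = i ∧ ω.val.2 k' = i)).card = 0 := by
      rw [Finset.card_eq_zero, filter_eq_empty_iff]
      rintro ω - ⟨h1, h2⟩
      exact hkk' (ω.2.2.1 (h1.trans h2.symm))
    rw [hzero, Nat.cast_zero, zero_div]

end
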